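/- Let φ: [0,r] → ℝ (with r ≥ π) be defined by φ(t) = sin(t) for 0 ≤ t ≤ π/2, φ(t) = 1 for π/2 ≤ t ≤ r − π/2, and φ(t) = −sin(t−r) for r − π/2 ≤ t ≤ r. Then for any continuous function k: [0,r] → ℝ with k ≤ n−1 pointwise, if 0 ≤ ∫₀^r ((n−1)(φ')² − φ² k) dt, then ∫₀^r k dt ≤ (n−1)π. -/

import Mathlib

/-- The elementary integral estimate underlying the second variation estimate
(Lemma 2.1): with the standard test function `φ` (equal to `sin t` near `0`,
`1` in the middle, `-sin (t - r)` near `r`), any continuous `k ≤ n - 1` with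
nonnegative "index form" `∫ ((n-1) φ'² - φ² k) ≥ 0` satisfies
`∫ k ≤ (n-1) π`. -/
theorem stmt_2 (n : ℕ) (hn : 2 ≤ n) (r : ℝ) (hr : Real.pi ≤ r)
    (φ : ℝ → ℝ)
    (hφ : ∀ t, φ t = if t ≤ Real.pi / 2 then Real.sin t
      else if t ≤ r - Real.pi / 2 then 1 else -Real.sin (t - r))
    (k : ℝ → ℝ) (hk_cont : ContinuousOn k (Set.Icc 0 r))
    (hk_le : ∀ t ∈ Set.Icc (0 : ℝ) r, k t ≤ (n : ℝ) - 1)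
    (hpos : 0 ≤ ∫ t in (0 : ℝ)..r, (((n : ℝ) - 1) * (deriv φ t) ^ 2 - (φ t) ^ 2 * k t)) :
    (∫ t in (0 : ℝ)..r, k t) ≤ ((n : ℝ) - 1) * Real.pi := by
  have hπ := Real.pi_pos
  have h01 : (0:ℝ) ≤ Real.pi / 2 := by linarith
  have h12 : Real.pi / 2 ≤ r - Real.pi / 2 := by linarith
  have h2r : r - Real.pi / 2 ≤ r := by linarith
  have h0r : (0:ℝ) ≤ r := by linarith
  have hn1 : (1:ℝ) ≤ (n:ℝ) - 1 := by
    have : (2:ℝ) ≤ (n:ℝ) := by exact_mod_cast hn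
    linarith
  set g : ℝ → ℝ := fun t => if t ≤ Real.pi / 2 then Real.cos t
      else if t ≤ r - Real.pi / 2 then 0 else -Real.cos (t - r) with hg_def
  -- continuity of φ and g
  have hφeq : φ = fun t => if t ≤ Real.pi / 2 then Real.sin t
      else if t ≤ r - Real.pi / 2 then 1 else -Real.sin (t - r) := funext hφ
  have hsubr : Continuous fun t : ℝ => t - r := continuous_id.sub continuous_const
  have hφ_cont : Continuous φ := by
    rw [hφeq]
    apply Continuous.if_le Real.continuous_sin ?_ continuous_id continuous_const ?_
    · apply Continuous.if_le continuous_const ((Real.continuous_sin.comp hsubr).neg)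
        continuous_id continuous_const
      intro x hx
      have hx' : x = r - Real.pi/2 := hx
      subst hx'
      have h : r - Real.pi/2 - r = -(Real.pi/2) := by ring
      show (1:ℝ) = -Real.sin (r - Real.pi/2 - r)
      rw [h, Real.sin_neg, Real.sin_pi_div_two]; norm_num
    · intro x hx
      have hx' : x = Real.pi/2 := hx
      subst hx'
      rw [Real.sin_pi_div_two, if_pos h12]
  have hg_cont : Continuous g := by
    rw [hg_def]
    apply Continuous.if_le Real.continuous_cos ?_ continuous_id continuous_const ?_
    · apply Continuous.if_le continuous_const ((Real.continuous_cos.comp hsubr).neg)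
        continuous_id continuous_const
      intro x hx
      have hx' : x = r - Real.pi/2 := hx
      subst hx'
      have h : r - Real.pi/2 - r = -(Real.pi/2) := by ring
      show (0:ℝ) = -Real.cos (r - Real.pi/2 - r)
      rw [h, Real.cos_neg, Real.cos_pi_div_two]; norm_num
    · intro x hx
      have hx' : x = Real.pi/2 := hx
      subst hx'
      rw [Real.cos_pi_div_two, if_pos h12]
  -- deriv φ = g away from the two junction points
  have hderiv : ∀ x : ℝ, x ≠ Real.pi/2 → x ≠ r - Real.pi/2 → deriv φ x = g x := by
    intro x hx1 hx2
    rcases lt_trichotomy x (Real.pi/2) with h | h | h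
    · have hev : φ =ᶠ[nhds x] Real.sin := by
        apply Filter.eventuallyEq_of_mem (Iio_mem_nhds h)
        intro s hs
        rw [hφ s, if_pos (le_of_lt hs)]
      rw [hev.deriv_eq, Real.deriv_sin, hg_def]
      simp [le_of_lt h]
    · exact absurd h hx1
    · rcases lt_trichotomy x (r - Real.pi/2) with h' | h' | h'
      · have hev : φ =ᶠ[nhds x] fun _ => (1:ℝ) := by
          apply Filter.eventuallyEq_of_mem (IsOpen.mem_nhds isOpen_Ioo
            (Set.mem_Ioo.2 ⟨h, h'⟩))
          intro s hs
          rw [hφ s, if_neg (not_le.2 hs.1), if_pos (le_of_lt hs.2)]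
        rw [hev.deriv_eq, deriv_const, hg_def]
        simp [not_le.2 h, le_of_lt h']
      · exact absurd h' hx2
      · have hev : φ =ᶠ[nhds x] fun s => -Real.sin (s - r) := by
          apply Filter.eventuallyEq_of_mem (Ioi_mem_nhds h')
          intro s hs
          have hs1 : ¬ s ≤ Real.pi/2 := not_le.2 (lt_of_le_of_lt h12 hs)
          rw [hφ s, if_neg hs1, if_neg (not_le.2 hs)]
        rw [hev.deriv_eq]
        have hd : HasDerivAt (fun s => -Real.sin (s - r)) (-(Real.cos (x - r) * 1)) x :=
          by have := (((Real.hasDerivAt_sin (x - r)).comp x ((hasDerivAt_id x).sub_const r))).neg; exact this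
        rw [hd.deriv, hg_def]
        simp [not_le.2 h, not_le.2 h']
  -- replace deriv φ by g in the hypothesis
  have hcong : (∫ t in (0:ℝ)..r, (((n:ℝ) - 1) * (deriv φ t) ^ 2 - (φ t) ^ 2 * k t))
      = ∫ t in (0:ℝ)..r, (((n:ℝ) - 1) * (g t) ^ 2 - (φ t) ^ 2 * k t) := by
    apply intervalIntegral.integral_congr_ae
    have hae : ∀ᵐ x : ℝ, x ∉ ({Real.pi/2, r - Real.pi/2} : Set ℝ) :=
      (((Set.finite_singleton (r - Real.pi/2)).insert (Real.pi/2)).countable).ae_notMem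
        MeasureTheory.volume
    filter_upwards [hae] with x hx _
    have hx1 : x ≠ Real.pi/2 := fun h => hx (by simp [h])
    have hx2 : x ≠ r - Real.pi/2 := fun h => hx (by simp [h])
    rw [hderiv x hx1 hx2]
  -- integrability helper
  have hCI : ∀ (f : ℝ → ℝ), ContinuousOn f (Set.Icc 0 r) → ∀ a b : ℝ, 0 ≤ a → a ≤ b → b ≤ r →
      IntervalIntegrable f MeasureTheory.volume a b := by
    intro f hf a b ha hab hb
    exact (hf.mono (by rw [Set.uIcc_of_le hab]; exact Set.Icc_subset_Icc ha hb)).intervalIntegrable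
  have hFc : ContinuousOn (fun t => ((n:ℝ) - 1) * (g t) ^ 2 - (φ t) ^ 2 * k t) (Set.Icc 0 r) :=
    ((continuous_const.mul (hg_cont.pow 2)).continuousOn).sub
      (((hφ_cont.pow 2).continuousOn).mul hk_cont)
  -- split the integrals
  have hFsplit : (∫ t in (0:ℝ)..r, (((n:ℝ) - 1) * (g t) ^ 2 - (φ t) ^ 2 * k t))
      = (∫ t in (0:ℝ)..(Real.pi/2), (((n:ℝ) - 1) * (g t) ^ 2 - (φ t) ^ 2 * k t))
      + (∫ t in (Real.pi/2)..(r - Real.pi/2), (((n:ℝ) - 1) * (g t) ^ 2 - (φ t) ^ 2 * k t))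
      + (∫ t in (r - Real.pi/2)..r, (((n:ℝ) - 1) * (g t) ^ 2 - (φ t) ^ 2 * k t)) := by
    rw [intervalIntegral.integral_add_adjacent_intervals
        (hCI _ hFc 0 (Real.pi/2) le_rfl h01 (by linarith))
        (hCI _ hFc (Real.pi/2) (r - Real.pi/2) h01 h12 h2r),
      intervalIntegral.integral_add_adjacent_intervals
        (hCI _ hFc 0 (r - Real.pi/2) le_rfl (by linarith) h2r)
        (hCI _ hFc (r - Real.pi/2) r (by linarith) h2r le_rfl)]
  have hksplit : (∫ t in (0:ℝ)..r, k t)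
      = (∫ t in (0:ℝ)..(Real.pi/2), k t)
      + (∫ t in (Real.pi/2)..(r - Real.pi/2), k t)
      + (∫ t in (r - Real.pi/2)..r, k t) := by
    rw [intervalIntegral.integral_add_adjacent_intervals
        (hCI _ hk_cont 0 (Real.pi/2) le_rfl h01 (by linarith))
        (hCI _ hk_cont (Real.pi/2) (r - Real.pi/2) h01 h12 h2r),
      intervalIntegral.integral_add_adjacent_intervals
        (hCI _ hk_cont 0 (r - Real.pi/2) le_rfl (by linarith) h2r)
        (hCI _ hk_cont (r - Real.pi/2) r (by linarith) h2r le_rfl)]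
  -- evaluate the three pieces
  have hI1 : (∫ t in (0:ℝ)..(Real.pi/2), (((n:ℝ) - 1) * (g t) ^ 2 - (φ t) ^ 2 * k t))
      = ∫ t in (0:ℝ)..(Real.pi/2), (((n:ℝ) - 1) * Real.cos t ^ 2 - Real.sin t ^ 2 * k t) := by
    apply intervalIntegral.integral_congr
    intro t ht
    beta_reduce
    rw [Set.uIcc_of_le h01] at ht
    rw [hφ t, if_pos ht.2, hg_def]
    simp [ht.2]
  have hI2 : (∫ t in (Real.pi/2)..(r - Real.pi/2), (((n:ℝ) - 1) * (g t) ^ 2 - (φ t) ^ 2 * k t))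
      = ∫ t in (Real.pi/2)..(r - Real.pi/2), (-k t) := by
    apply intervalIntegral.integral_congr
    intro t ht
    beta_reduce
    rw [Set.uIcc_of_le h12] at ht
    have hgt : g t = 0 := by
      by_cases h : t ≤ Real.pi/2
      · have heq : t = Real.pi/2 := le_antisymm h ht.1
        rw [hg_def]; simp only
        rw [if_pos h, heq, Real.cos_pi_div_two]
      · rw [hg_def]; simp only
        rw [if_neg h, if_pos ht.2]
    have hφt : φ t = 1 := by
      by_cases h : t ≤ Real.pi/2
      · have heq : t = Real.pi/2 := le_antisymm h ht.1
        rw [hφ t, if_pos h, heq, Real.sin_pi_div_two]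
      · rw [hφ t, if_neg h, if_pos ht.2]
    rw [hgt, hφt]; ring
  have hI3 : (∫ t in (r - Real.pi/2)..r, (((n:ℝ) - 1) * (g t) ^ 2 - (φ t) ^ 2 * k t))
      = ∫ t in (r - Real.pi/2)..r, (((n:ℝ) - 1) * Real.cos (t - r) ^ 2 - Real.sin (t - r) ^ 2 * k t) := by
    apply intervalIntegral.integral_congr
    intro t ht
    beta_reduce
    rw [Set.uIcc_of_le h2r] at ht
    have hgt : g t = -Real.cos (t - r) := by
      by_cases h1 : t ≤ Real.pi/2
      · have ht1 : t = Real.pi/2 := le_antisymm h1 (le_trans h12 ht.1)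
        have hrr : t - r = -(Real.pi/2) := by
          have : r ≤ Real.pi := by linarith [ht.1, ht1.le, ht1.ge]
          have hrp : r = Real.pi := le_antisymm this hr
          rw [ht1, hrp]; ring
        rw [hg_def]; simp only
        rw [if_pos h1, hrr, ht1, Real.cos_neg, Real.cos_pi_div_two]; norm_num
      · by_cases h2 : t ≤ r - Real.pi/2
        · have ht2 : t = r - Real.pi/2 := le_antisymm h2 ht.1
          have hrr : t - r = -(Real.pi/2) := by rw [ht2]; ring
          rw [hg_def]; simp only
          rw [if_neg h1, if_pos h2, hrr, Real.cos_neg, Real.cos_pi_div_two]; norm_num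
        · rw [hg_def]; simp only
          rw [if_neg h1, if_neg h2]
    have hφt : φ t = -Real.sin (t - r) := by
      by_cases h1 : t ≤ Real.pi/2
      · have ht1 : t = Real.pi/2 := le_antisymm h1 (le_trans h12 ht.1)
        have hrr : t - r = -(Real.pi/2) := by
          have : r ≤ Real.pi := by linarith [ht.1, ht1.le, ht1.ge]
          have hrp : r = Real.pi := le_antisymm this hr
          rw [ht1, hrp]; ring
        rw [hφ t, if_pos h1, hrr, ht1, Real.sin_neg, Real.sin_pi_div_two]; norm_num
      · by_cases h2 : t ≤ r - Real.pi/2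
        · have ht2 : t = r - Real.pi/2 := le_antisymm h2 ht.1
          have hrr : t - r = -(Real.pi/2) := by rw [ht2]; ring
          rw [hφ t, if_neg h1, if_pos h2, hrr, Real.sin_neg, Real.sin_pi_div_two]; norm_num
        · rw [hφ t, if_neg h1, if_neg h2]
    rw [hgt, hφt]; ring
  -- the hypothesis now reads: ∫ mid k ≤ IA + IC
  rw [hcong, hFsplit, hI1, hI2, hI3, intervalIntegral.integral_neg] at hpos
  -- continuity of the piece integrands
  have hcA : ContinuousOn (fun t => ((n:ℝ) - 1) * Real.cos t ^ 2 - Real.sin t ^ 2 * k t)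
      (Set.Icc 0 r) :=
    ((continuous_const.mul (Real.continuous_cos.pow 2)).continuousOn).sub
      (((Real.continuous_sin.pow 2)).continuousOn.mul hk_cont)
  have hcC : ContinuousOn (fun t => ((n:ℝ) - 1) * Real.cos (t - r) ^ 2 - Real.sin (t - r) ^ 2 * k t)
      (Set.Icc 0 r) :=
    ((continuous_const.mul ((Real.continuous_cos.comp hsubr).pow 2)).continuousOn).sub
      ((((Real.continuous_sin.comp hsubr).pow 2)).continuousOn.mul hk_cont)
  -- combine k with the boundary integrands
  have hA : (∫ t in (0:ℝ)..(Real.pi/2), k t)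
      + (∫ t in (0:ℝ)..(Real.pi/2), (((n:ℝ) - 1) * Real.cos t ^ 2 - Real.sin t ^ 2 * k t))
      ≤ ((n:ℝ) - 1) * (Real.pi/2) := by
    rw [← intervalIntegral.integral_add
        (hCI _ hk_cont 0 (Real.pi/2) le_rfl h01 (by linarith))
        (hCI _ hcA 0 (Real.pi/2) le_rfl h01 (by linarith))]
    have hmono : (∫ t in (0:ℝ)..(Real.pi/2),
        (k t + (((n:ℝ) - 1) * Real.cos t ^ 2 - Real.sin t ^ 2 * k t)))
        ≤ ∫ t in (0:ℝ)..(Real.pi/2), (2 * ((n:ℝ) - 1) * Real.cos t ^ 2) := by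
      apply intervalIntegral.integral_mono_on h01
      · exact IntervalIntegrable.add
          (hCI _ hk_cont 0 (Real.pi/2) le_rfl h01 (by linarith))
          (hCI _ hcA 0 (Real.pi/2) le_rfl h01 (by linarith))
      · exact (continuous_const.mul (Real.continuous_cos.pow 2)).intervalIntegrable _ _
      · intro x hx
        have hkx : k x ≤ (n:ℝ) - 1 := hk_le x ⟨hx.1, le_trans hx.2 (by linarith)⟩
        have hsc := Real.sin_sq_add_cos_sq x
        nlinarith [sq_nonneg (Real.cos x), mul_nonneg (sq_nonneg (Real.cos x)) (sub_nonneg.2 hkx)]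
    have hval : (∫ t in (0:ℝ)..(Real.pi/2), (2 * ((n:ℝ) - 1) * Real.cos t ^ 2))
        = ((n:ℝ) - 1) * (Real.pi/2) := by
      rw [intervalIntegral.integral_const_mul, integral_cos_sq]
      rw [Real.cos_pi_div_two, Real.sin_zero, Real.cos_zero]
      ring
    linarith
  have hC : (∫ t in (r - Real.pi/2)..r, k t)
      + (∫ t in (r - Real.pi/2)..r, (((n:ℝ) - 1) * Real.cos (t - r) ^ 2 - Real.sin (t - r) ^ 2 * k t))
      ≤ ((n:ℝ) - 1) * (Real.pi/2) := by
    rw [← intervalIntegral.integral_add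
        (hCI _ hk_cont (r - Real.pi/2) r (by linarith) h2r le_rfl)
        (hCI _ hcC (r - Real.pi/2) r (by linarith) h2r le_rfl)]
    have hmono : (∫ t in (r - Real.pi/2)..r,
        (k t + (((n:ℝ) - 1) * Real.cos (t - r) ^ 2 - Real.sin (t - r) ^ 2 * k t)))
        ≤ ∫ t in (r - Real.pi/2)..r, (2 * ((n:ℝ) - 1) * Real.cos (t - r) ^ 2) := by
      apply intervalIntegral.integral_mono_on h2r
      · exact IntervalIntegrable.add
          (hCI _ hk_cont (r - Real.pi/2) r (by linarith) h2r le_rfl)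
          (hCI _ hcC (r - Real.pi/2) r (by linarith) h2r le_rfl)
      · exact (continuous_const.mul ((Real.continuous_cos.comp hsubr).pow 2)).intervalIntegrable _ _
      · intro x hx
        have hkx : k x ≤ (n:ℝ) - 1 := hk_le x ⟨by linarith [hx.1], hx.2⟩
        have hsc := Real.sin_sq_add_cos_sq (x - r)
        nlinarith [sq_nonneg (Real.cos (x - r)),
          mul_nonneg (sq_nonneg (Real.cos (x - r))) (sub_nonneg.2 hkx)]
    have hval : (∫ t in (r - Real.pi/2)..r, (2 * ((n:ℝ) - 1) * Real.cos (t - r) ^ 2))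
        = ((n:ℝ) - 1) * (Real.pi/2) := by
      rw [intervalIntegral.integral_const_mul]
      have hcomp : (∫ t in (r - Real.pi/2)..r, Real.cos (t - r) ^ 2)
          = ∫ t in (r - Real.pi/2 - r)..(r - r), Real.cos t ^ 2 :=
        intervalIntegral.integral_comp_sub_right (fun x => Real.cos x ^ 2) r
      have e1 : r - Real.pi/2 - r = -(Real.pi/2) := by ring
      have e2 : r - r = 0 := sub_self r
      rw [hcomp, e1, e2, integral_cos_sq]
      rw [Real.cos_zero, Real.sin_zero, Real.cos_neg, Real.sin_neg, Real.cos_pi_div_two]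
      ring
    linarith
  rw [hksplit]
  linarith [hA, hC, hpos]
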